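/- Let p be an odd prime and a an integer with 0 < a < p, with canonical continued fraction expansion a/p = [0; a_1, …, a_n] and convergent denominators q_k. For integers r with 0 ≤ r ≤ a_{2i+2}, write q_{2i,r} := r·q_{2i+1} + q_{2i}. Let h be an integer with 1 ≤ h < p and let i be an integer with 0 ≤ i < (n−1)/2. If the fractional part of q_{2i+2}·a/p is strictly less than the fractional part of h·a/p, which in turn is strictly less than the fractional part of q_{2i}·a/p, then there exists an integer r with 0 ≤ r ≤ a_{2i+2} such that ‖(h − q_{2i,r})·a/p‖ < ‖q_{2i+1}·a/p‖, and such that, if in addition |h − q_{2i,r}| < q_{2i+2}, then h = q_{2i,r}. -/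

import Mathlib

/-- The distance from a real number to the nearest integer. -/
noncomputable def distNearestInt (x : ℝ) : ℝ := |x - round x|

lemma dni_add_int (x : ℝ) (k : ℤ) : distNearestInt (x + (k:ℝ)) = distNearestInt x := by
  unfold distNearestInt
  rw [round_add_intCast]
  congr 1
  push_cast
  ring

lemma dni_le_abs (x : ℝ) : distNearestInt x ≤ |x| := by
  simpa [distNearestInt] using round_le x 0

set_option maxHeartbeats 4000000 in
/-- Lemma 7.5: for the canonical continued fraction expansion
`a/p = [0; a_1, …, a_n]` with convergent denominators `q_k`, setting
`q_{2i,r} = r·q_{2i+1} + q_{2i}`: if `1 ≤ h < p` and `0 ≤ i < (n-1)/2` are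
such that the fractional part of `q_{2i+2}·a/p` is `<` that of `h·a/p`,
which is `<` that of `q_{2i}·a/p`, then there is `0 ≤ r ≤ a_{2i+2}` with
`‖(h - q_{2i,r})·a/p‖ < ‖q_{2i+1}·a/p‖`, and moreover
`|h - q_{2i,r}| < q_{2i+2}` implies `h = q_{2i,r}`. -/
theorem statement12
    (p a : ℤ) (hp : Prime p) (hodd : Odd p) (ha : 0 < a) (hap : a < p)
    (n : ℕ) (A P Q : ℕ → ℤ)
    -- canonical continued fraction expansion a/p = [0; A 1, …, A n]
    (hA : ∀ k, 1 ≤ k → k ≤ n → 1 ≤ A k) (hAn : 2 ≤ A n)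
    -- denominators of the convergents
    (hQ0 : Q 0 = 1) (hQ1 : Q 1 = A 1)
    (hQrec : ∀ k, k + 2 ≤ n → Q (k + 2) = A (k + 2) * Q (k + 1) + Q k)
    -- numerators of the convergents
    (hP0 : P 0 = 0) (hP1 : P 1 = 1)
    (hPrec : ∀ k, k + 2 ≤ n → P (k + 2) = A (k + 2) * P (k + 1) + P k)
    -- the n-th convergent is a/p in lowest terms
    (hQn : Q n = p) (hPn : P n = a)
    (h : ℤ) (hh1 : 1 ≤ h) (hh2 : h < p)
    (i : ℕ) (hi : (i : ℚ) < ((n : ℚ) - 1) / 2)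
    (hf1 : Int.fract (((Q (2 * i + 2) * a : ℤ) : ℝ) / (p : ℝ)) <
      Int.fract (((h * a : ℤ) : ℝ) / (p : ℝ)))
    (hf2 : Int.fract (((h * a : ℤ) : ℝ) / (p : ℝ)) <
      Int.fract (((Q (2 * i) * a : ℤ) : ℝ) / (p : ℝ))) :
    ∃ s : ℤ, 0 ≤ s ∧ s ≤ A (2 * i + 2) ∧
      distNearestInt ((((h - (s * Q (2 * i + 1) + Q (2 * i))) * a : ℤ) : ℝ) / (p : ℝ)) <
        distNearestInt (((Q (2 * i + 1) * a : ℤ) : ℝ) / (p : ℝ)) ∧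
      (|h - (s * Q (2 * i + 1) + Q (2 * i))| < Q (2 * i + 2) →
        h = s * Q (2 * i + 1) + Q (2 * i)) := by
  have hp' : (0:ℤ) < p := ha.trans hap
  have hpR : (0:ℝ) < (p:ℝ) := by exact_mod_cast hp'
  -- n bound
  have hn2 : 2 * i + 2 ≤ n := by
    have h1 : ((2 * i + 1 : ℕ) : ℚ) < (n : ℚ) := by push_cast; linarith
    have h2 : 2 * i + 1 < n := by exact_mod_cast h1
    omega
  -- D k = Q k * a - P k * p
  set D : ℕ → ℤ := fun j => Q j * a - P j * p with hD
  have hDdef : ∀ j, D j = Q j * a - P j * p := fun j => rfl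
  -- determinant identity
  have hdet : ∀ k, k + 1 ≤ n → P (k+1) * Q k - P k * Q (k+1) = (-1)^k := by
    intro k
    induction k with
    | zero => intro _; simp [hP0, hP1, hQ0, hQ1]
    | succ k ih =>
      intro hk
      have h2 : k + 2 ≤ n := by omega
      have ihk := ih (by omega)
      rw [show k+1+1 = k+2 from rfl, hPrec k h2, hQrec k h2, pow_succ]
      linear_combination (-1 : ℤ) * ihk
  -- positivity of Q
  have hQpos : ∀ k, k ≤ n → 1 ≤ Q k := by
    intro k
    induction k using Nat.strong_induction_on with
    | _ k ih =>
      intro hk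
      match k with
      | 0 => rw [hQ0]
      | 1 => rw [hQ1]; exact hA 1 le_rfl hk
      | (k+2) =>
        rw [hQrec k hk]
        have h1 := ih (k+1) (by omega) (by omega)
        have h0 := ih k (by omega) (by omega)
        have hAk := hA (k+2) (by omega) hk
        nlinarith
  have hDn : D n = 0 := by rw [hDdef, hQn, hPn]; ring
  have hDn1 : D (n-1) = (-1)^(n-1) := by
    have hdd := hdet (n-1) (by omega)
    rw [show n-1+1 = n from by omega, hPn, hQn] at hdd
    rw [hDdef]
    linear_combination hdd
  -- sign and decrease, by downward induction
  have hGood : ∀ j k, k + j = n →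
      ((-1:ℤ)^k * D k = |D k| ∧ (k + 1 ≤ n → |D (k+1)| < |D k|)) := by
    intro j
    induction j using Nat.strong_induction_on with
    | _ j ih =>
      match j with
      | 0 =>
        intro k hk
        have hkn : k = n := by omega
        subst hkn
        exact ⟨by rw [hDn]; simp, fun hc => absurd hc (by omega)⟩
      | 1 =>
        intro k hk
        have hkn : k = n - 1 := by omega
        have hDk : D k = (-1)^k := by rw [hkn, hDn1]
        constructor
        · rw [hDk, ← pow_add, abs_pow, abs_neg, abs_one, one_pow]
          rw [show (-1:ℤ)^(k+k) = ((-1:ℤ)^2)^k from by rw [← pow_mul]; ring_nf]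
          norm_num
        · intro _
          rw [show k + 1 = n from by omega, hDn, hDk, abs_pow, abs_neg, abs_one, one_pow]
          norm_num
      | (j+2) =>
        intro k hk
        have h2 : k + 2 ≤ n := by omega
        obtain ⟨s1, m1⟩ := ih (j+1) (by omega) (k+1) (by omega)
        obtain ⟨s2, m2⟩ := ih j (by omega) (k+2) (by omega)
        have hrecD : D k = D (k+2) - A (k+2) * D (k+1) := by
          rw [hDdef, hDdef, hDdef, hQrec k h2, hPrec k h2]; ring
        have hA2 : 1 ≤ A (k+2) := hA (k+2) (by omega) h2
        have key : (-1:ℤ)^k * D k = |D (k+2)| + A (k+2) * |D (k+1)| := by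
          rw [hrecD, ← s2, ← s1]
          ring
        have hnn : 0 ≤ (-1:ℤ)^k * D k := by
          rw [key]
          have := abs_nonneg (D (k+2))
          have := abs_nonneg (D (k+1))
          nlinarith
        have habs : |D k| = (-1:ℤ)^k * D k := by
          have h' : |D k| = |(-1:ℤ)^k * D k| := by
            rw [abs_mul, abs_pow, abs_neg, abs_one, one_pow, one_mul]
          rw [h', abs_of_nonneg hnn]
        refine ⟨habs.symm, fun _ => ?_⟩
        rw [habs, key]
        have hp1 : 1 ≤ |D (k+1)| := by
          have h1 : |D (k+2)| < |D (k+1)| := m1 h2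
          have h0 := abs_nonneg (D (k+2))
          omega
        by_cases hkn : k + 2 = n
        · have hA2' : 2 ≤ A (k+2) := by rw [hkn]; exact hAn
          have h0 : |D (k+2)| = 0 := by rw [hkn, hDn]; simp
          have h3 : 2 * |D (k+1)| ≤ A (k+2) * |D (k+1)| :=
            mul_le_mul_of_nonneg_right hA2' (abs_nonneg _)
          linarith
        · have h1' : 1 ≤ |D (k+2)| := by
            have hh : |D (k+3)| < |D (k+2)| := m2 (by omega)
            have := abs_nonneg (D (k+3))
            omega
          have h3 : 1 * |D (k+1)| ≤ A (k+2) * |D (k+1)| :=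
            mul_le_mul_of_nonneg_right hA2 (abs_nonneg _)
          linarith
  have hsign : ∀ k, k ≤ n → (-1:ℤ)^k * D k = |D k| := fun k hk => (hGood (n-k) k (by omega)).1
  have hdec : ∀ k, k+1 ≤ n → |D (k+1)| < |D k| := fun k hk => (hGood (n-k) k (by omega)).2 hk
  have hmono : ∀ k l, k ≤ l → l ≤ n → |D l| ≤ |D k| := by
    intro k l hkl
    induction l, hkl using Nat.le_induction with
    | base => intro _; exact le_rfl
    | succ l hl ihm =>
      intro hln
      exact le_trans (le_of_lt (hdec l hln)) (ihm (by omega))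
  have hEven : ∀ k, Even k → k ≤ n → D k = |D k| := by
    intro k he hk
    rw [← hsign k hk, he.neg_one_pow, one_mul]
  have hOdd : ∀ k, Odd k → k ≤ n → D k = -|D k| := by
    intro k ho hk
    rw [← hsign k hk, ho.neg_one_pow]; ring
  have hD0 : D 0 = a := by rw [hDdef, hQ0, hP0]; ring
  have hD1 : D 1 = A 1 * a - p := by rw [hDdef, hQ1, hP1]; ring
  have habs0 : |D 0| = a := by rw [hD0, abs_of_pos ha]
  have habs1a : |D 1| < a := by
    have := hdec 0 (by omega)
    rwa [habs0] at this
  have habs1b : |D 1| ≤ p - a := by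
    have h1 : D 1 = -|D 1| := hOdd 1 odd_one (by omega)
    have hA1 : 1 ≤ A 1 := hA 1 le_rfl (by omega)
    have haa : a ≤ A 1 * a := by nlinarith
    linarith [hD1.symm.trans h1]
  -- d := |D (2i+1)|
  set d : ℤ := |D (2*i+1)| with hdd
  have hDodd : D (2*i+1) = -d := hOdd (2*i+1) (odd_two_mul_add_one i) (by omega)
  have hd1 : 1 ≤ d := by
    have h1 : |D (2*i+2)| < |D (2*i+1)| := hdec (2*i+1) hn2
    have h0 := abs_nonneg (D (2*i+2))
    omega
  have hdlt : 2 * d < p := by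
    have h1 : d ≤ |D 1| := hmono 1 (2*i+1) (by omega) (by omega)
    linarith
  have hDev0 : 0 ≤ D (2*i) := by
    rw [hEven (2*i) (even_two_mul i) (by omega)]; exact abs_nonneg _
  have hDev2 : 0 ≤ D (2*i+2) := by
    rw [hEven (2*i+2) ⟨i+1, by ring⟩ hn2]; exact abs_nonneg _
  have hDlea : ∀ k, k ≤ n → D k ≤ a := by
    intro k hk
    have h1 := hmono 0 k (by omega) hk
    rw [habs0] at h1
    exact le_trans (le_abs_self _) h1
  -- fract computations
  have hsplit : ∀ z E g : ℤ, z = p * E + g →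
      distNearestInt ((z:ℝ)/(p:ℝ)) = distNearestInt ((g:ℝ)/(p:ℝ)) := by
    intro z E g hz
    have hzR : (z:ℝ) = p * E + g := by exact_mod_cast congrArg (fun t : ℤ => (t:ℝ)) hz
    have he : (z:ℝ)/(p:ℝ) = (g:ℝ)/(p:ℝ) + (E:ℝ) := by
      rw [hzR]; field_simp; ring
    rw [he, dni_add_int]
  have hfr : ∀ z E g : ℤ, z = p * E + g → 0 ≤ g → g < p →
      Int.fract ((z:ℝ)/(p:ℝ)) = (g:ℝ)/(p:ℝ) := by
    intro z E g hz h0 h1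
    have hzR : (z:ℝ) = p * E + g := by exact_mod_cast congrArg (fun t : ℤ => (t:ℝ)) hz
    have he : (z:ℝ)/(p:ℝ) = (E:ℝ) + (g:ℝ)/(p:ℝ) := by
      rw [hzR]; field_simp
    rw [he, Int.fract_intCast_add]
    refine Int.fract_eq_self.mpr ⟨by positivity, ?_⟩
    rw [div_lt_one hpR]
    exact_mod_cast h1
  set m : ℤ := h * a % p with hmm
  have hmdef : h * a = p * (h * a / p) + m := (Int.mul_ediv_add_emod (h*a) p).symm
  have hm0 : 0 ≤ m := Int.emod_nonneg _ (by omega)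
  have hmp : m < p := Int.emod_lt_of_pos _ hp'
  have e1 : Int.fract (((Q (2*i+2) * a : ℤ):ℝ)/(p:ℝ)) = ((D (2*i+2):ℤ):ℝ)/(p:ℝ) := by
    refine hfr _ (P (2*i+2)) _ (by rw [hDdef]; ring) hDev2 ?_
    exact lt_of_le_of_lt (hDlea _ hn2) hap
  have e2 : Int.fract (((h * a : ℤ):ℝ)/(p:ℝ)) = ((m:ℤ):ℝ)/(p:ℝ) :=
    hfr _ (h*a/p) m hmdef hm0 hmp
  have e3 : Int.fract (((Q (2*i) * a : ℤ):ℝ)/(p:ℝ)) = ((D (2*i):ℤ):ℝ)/(p:ℝ) := by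
    refine hfr _ (P (2*i)) _ (by rw [hDdef]; ring) hDev0 ?_
    exact lt_of_le_of_lt (hDlea _ (by omega)) hap
  rw [e1, e2] at hf1
  rw [e2, e3] at hf2
  have hint1 : D (2*i+2) < m := by
    have h1 := (div_lt_div_iff₀ hpR hpR).mp hf1
    have h2 := lt_of_mul_lt_mul_right h1 hpR.le
    exact_mod_cast h2
  have hint2 : m < D (2*i) := by
    have h1 := (div_lt_div_iff₀ hpR hpR).mp hf2
    have h2 := lt_of_mul_lt_mul_right h1 hpR.le
    exact_mod_cast h2
  -- choice of s
  set c : ℤ := D (2*i) - m with hcc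
  have hc : 0 < c := by omega
  have hrec2 : D (2*i+2) = A (2*i+2) * D (2*i+1) + D (2*i) := by
    rw [hDdef, hDdef, hDdef, hQrec (2*i) hn2, hPrec (2*i) hn2]; ring
  have hAd : A (2*i+2) * d = D (2*i) - D (2*i+2) := by
    have := hrec2
    rw [hDodd] at this
    linarith
  have hcA : c < A (2*i+2) * d := by rw [hAd]; omega
  set s : ℤ := (c + d - 1) / d with hss
  have hmod := Int.mul_ediv_add_emod (c + d - 1) d
  have hr0 : 0 ≤ (c + d - 1) % d := Int.emod_nonneg _ (by omega)
  have hr1 : (c + d - 1) % d < d := Int.emod_lt_of_pos _ (by omega)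
  have hs1 : c ≤ s * d := by linarith [hmod, hr0, hr1]
  have hs2 : s * d < c + d := by linarith [hmod, hr0, hr1]
  have hs0 : 0 < s := by
    by_contra hcon
    push_neg at hcon
    have hds : d * s ≤ 0 := mul_nonpos_of_nonneg_of_nonpos (by omega) hcon
    linarith
  have hsA : s ≤ A (2*i+2) := by
    by_contra hcon
    push_neg at hcon
    have h1 : A (2*i+2) + 1 ≤ s := by omega
    have h2 : d * (A (2*i+2) + 1) ≤ d * s := mul_le_mul_of_nonneg_left h1 (by omega)
    linarith
  -- the remainder g
  set g : ℤ := m - D (2*i) + s * d with hgg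
  have hg0 : 0 ≤ g := by rw [hgg]; have h' := hs1; rw [hcc] at h'; linarith
  have hgd : g < d := by rw [hgg]; have h' := hs2; rw [hcc] at h'; linarith
  -- algebra
  have halg : (h - (s * Q (2*i+1) + Q (2*i))) * a
      = p * (h * a / p - (s * P (2*i+1) + P (2*i))) + g := by
    have e4 : Q (2*i+1) * a = P (2*i+1) * p + D (2*i+1) := by rw [hDdef]; ring
    have e5 : Q (2*i) * a = P (2*i) * p + D (2*i) := by rw [hDdef]; ring
    rw [hgg]
    linear_combination hmdef - s * e4 - e5 - s * hDodd
  -- RHS distance equals d/p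
  have hRHS : distNearestInt (((Q (2*i+1) * a : ℤ):ℝ)/(p:ℝ)) = ((d:ℤ):ℝ)/(p:ℝ) := by
    have e4 : (Q (2*i+1) * a : ℤ) = p * P (2*i+1) + (-d) := by
      have := hDdef (2*i+1)
      rw [hDodd] at this
      linarith
    rw [hsplit _ _ _ e4]
    have hx : (((-d:ℤ)):ℝ)/(p:ℝ) = -(((d:ℤ):ℝ)/(p:ℝ)) := by push_cast; ring
    have hdR : (0:ℝ) < ((d:ℤ):ℝ) := by exact_mod_cast hd1
    have h2dR : 2 * ((d:ℤ):ℝ) < (p:ℝ) := by exact_mod_cast hdlt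
    have hb1 : ((d:ℤ):ℝ)/(p:ℝ) < 1/2 := by rw [div_lt_iff₀ hpR]; linarith
    have hb0 : 0 < ((d:ℤ):ℝ)/(p:ℝ) := div_pos hdR hpR
    have hround : round ((((-d:ℤ)):ℝ)/(p:ℝ)) = 0 := by
      rw [round_eq, hx, Int.floor_eq_zero_iff, Set.mem_Ico]
      constructor <;> [linarith; linarith]
    unfold distNearestInt
    rw [hround, hx]
    push_cast
    rw [sub_zero, abs_neg, abs_of_nonneg (by positivity)]
  -- LHS distance < d/p
  have hLHS : distNearestInt ((((h - (s * Q (2*i+1) + Q (2*i))) * a : ℤ):ℝ)/(p:ℝ))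
      < ((d:ℤ):ℝ)/(p:ℝ) := by
    rw [hsplit _ _ _ halg]
    refine lt_of_le_of_lt (dni_le_abs _) ?_
    rw [abs_of_nonneg (by positivity : (0:ℝ) ≤ ((g:ℤ):ℝ)/(p:ℝ))]
    have hgdR : ((g:ℤ):ℝ) < ((d:ℤ):ℝ) := by exact_mod_cast hgd
    gcongr
  -- determinant at 2i+1
  have hdetK : P (2*i+2) * Q (2*i+1) - P (2*i+1) * Q (2*i+2) = -1 := by
    have hdd2 := hdet (2*i+1) hn2
    rw [(odd_two_mul_add_one i).neg_one_pow] at hdd2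
    exact hdd2
  -- best approximation property
  have hkey : ∀ t u : ℤ, t ≠ 0 → |t| < Q (2*i+2) → d ≤ |t * a - u * p| := by
    intro t u ht0 htlt
    set x : ℤ := t * P (2*i+1) - u * Q (2*i+1) with hx
    set y : ℤ := -(t * P (2*i+2) - u * Q (2*i+2)) with hy
    have hxy1 : x * Q (2*i+2) + y * Q (2*i+1) = t := by
      rw [hx, hy]; linear_combination (-t) * hdetK
    have hxy2 : x * P (2*i+2) + y * P (2*i+1) = u := by
      rw [hx, hy]; linear_combination (-u) * hdetK
    have hsum : t * a - u * p = x * D (2*i+2) + y * D (2*i+1) := by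
      have e4 : D (2*i+1) = Q (2*i+1) * a - P (2*i+1) * p := hDdef _
      have e5 : D (2*i+2) = Q (2*i+2) * a - P (2*i+2) * p := hDdef _
      linear_combination (-a) * hxy1 + p * hxy2 - x * e5 - y * e4
    have hQk : (1:ℤ) ≤ Q (2*i+1) := hQpos _ (by omega)
    have hQK : (1:ℤ) ≤ Q (2*i+2) := hQpos _ hn2
    have habl := abs_lt.mp htlt
    rcases lt_trichotomy y 0 with hy0 | hy0 | hy0
    · have hx0 : 0 ≤ x := by
        by_contra hx0
        push_neg at hx0
        have h1 : x * Q (2*i+2) ≤ -1 * Q (2*i+2) :=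
          mul_le_mul_of_nonneg_right (by omega) (by omega)
        have h2 : y * Q (2*i+1) ≤ -1 * Q (2*i+1) :=
          mul_le_mul_of_nonneg_right (by omega) (by omega)
        linarith [habl.1, hxy1]
      have h3 : 0 ≤ x * D (2*i+2) := mul_nonneg hx0 hDev2
      have h4 : d ≤ y * D (2*i+1) := by
        rw [hDodd]
        have h6 : 1 * d ≤ (-y) * d :=
          mul_le_mul_of_nonneg_right (by omega) (by omega)
        linarith
      have h5 : d ≤ t * a - u * p := by rw [hsum]; linarith
      exact le_trans h5 (le_abs_self _)
    · exfalso
      rw [hy0] at hxy1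
      simp only [zero_mul, add_zero] at hxy1
      rcases eq_or_ne x 0 with hx0 | hx0
      · rw [hx0] at hxy1
        simp only [zero_mul] at hxy1
        exact ht0 hxy1.symm
      · have h1 : 1 ≤ |x| := Int.one_le_abs hx0
        have h2 : Q (2*i+2) ≤ |x| * Q (2*i+2) := by
          have h7 : 1 * Q (2*i+2) ≤ |x| * Q (2*i+2) :=
            mul_le_mul_of_nonneg_right h1 (by omega)
          linarith
        have h3 : |t| = |x| * Q (2*i+2) := by
          rw [← hxy1, abs_mul, abs_of_pos (by omega : (0:ℤ) < Q (2*i+2))]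
        rw [h3] at htlt
        linarith
    · have hx0 : x ≤ 0 := by
        by_contra hx0
        push_neg at hx0
        have h1 : 1 * Q (2*i+2) ≤ x * Q (2*i+2) :=
          mul_le_mul_of_nonneg_right (by omega) (by omega)
        have h2 : 1 * Q (2*i+1) ≤ y * Q (2*i+1) :=
          mul_le_mul_of_nonneg_right (by omega) (by omega)
        linarith [habl.2, hxy1]
      have h3 : x * D (2*i+2) ≤ 0 := mul_nonpos_of_nonpos_of_nonneg hx0 hDev2
      have h4 : y * D (2*i+1) ≤ -d := by
        rw [hDodd]
        have h6 : 1 * d ≤ y * d := mul_le_mul_of_nonneg_right (by omega) (by omega)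
        linarith
      have h5 : t * a - u * p ≤ -d := by rw [hsum]; linarith
      exact le_abs.mpr (Or.inr (by linarith))
  refine ⟨s, hs0.le, hsA, by rw [hRHS]; exact hLHS, ?_⟩
  intro hub
  by_contra hne
  have ht0 : h - (s * Q (2*i+1) + Q (2*i)) ≠ 0 := sub_ne_zero.mpr hne
  have hlow : ((d:ℤ):ℝ)/(p:ℝ) ≤
      distNearestInt ((((h - (s * Q (2*i+1) + Q (2*i))) * a : ℤ):ℝ)/(p:ℝ)) := by
    set z : ℤ := (h - (s * Q (2*i+1) + Q (2*i))) * a with hz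
    unfold distNearestInt
    set u : ℤ := round ((z:ℝ)/(p:ℝ)) with hu
    have he : (z:ℝ)/(p:ℝ) - (u:ℝ) = ((z - u*p : ℤ):ℝ)/(p:ℝ) := by
      push_cast
      field_simp
    rw [he, abs_div, abs_of_pos hpR]
    gcongr
    rw [← Int.cast_abs]
    have hk := hkey (h - (s * Q (2*i+1) + Q (2*i))) u ht0 hub
    have hzz : d ≤ |z - u * p| := by rw [hz]; exact hk
    exact_mod_cast hzz
  linarith
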